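/- arXiv:1707.06624 — 3 statements merged into one kernel-verified Lean document; each statement's English description precedes it below -/
import Mathlib

section
/- If a group G of isometries of ℂ contains two primitive rotations of order m ≥ 2 with distinct fixed points and m ∉ {2,3,4,6}, then G contains translations of arbitrarily small nonzero translation length; in particular its action on ℂ is not properly discontinuous. -/
open Complex

/-- If a group `G` of isometries of `ℂ` contains two primitive rotations of order
`m ≥ 2` with distinct fixed points and `m ∉ {2,3,4,6}`, then `G` contains
translations of arbitrarily small nonzero translation length; in particular the
action of `G` on `ℂ` is not properly discontinuous. -/
theorem indiscrete_of_noncrystallographic (G : Subgroup (ℂ ≃ᵢ ℂ)) (m : ℕ) (hm : 2 ≤ m)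
    (hm' : m ∉ ({2, 3, 4, 6} : Set ℕ)) (p q : ℂ) (hpq : p ≠ q)
    (r s : ℂ ≃ᵢ ℂ) (hrG : r ∈ G) (hsG : s ∈ G)
    (hr : ∀ x, r x = Complex.exp (2 * Real.pi * Complex.I / m) * (x - p) + p)
    (hs : ∀ x, s x = Complex.exp (2 * Real.pi * Complex.I / m) * (x - q) + q) :
    (∀ ε : ℝ, 0 < ε → ∃ g ∈ G, ∃ v : ℂ, v ≠ 0 ∧ ‖v‖ < ε ∧
      ∀ x, g x = x + v) ∧
    ¬ (∀ K : Set ℂ, IsCompact K → {g : ℂ ≃ᵢ ℂ | g ∈ G ∧ (g '' K ∩ K).Nonempty}.Finite) := by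
  classical
  have hmR : (2 : ℝ) ≤ m := by exact_mod_cast hm
  have hmC : (m : ℂ) ≠ 0 := Nat.cast_ne_zero.mpr (by omega)
  have hpi := Real.pi_pos
  set ζ : ℂ := Complex.exp (2 * Real.pi * Complex.I / m) with hζdef
  set θ : ℝ := 2 * Real.pi / m with hθdef
  have hθpos : 0 < θ := by positivity
  have hθζ : ζ = Complex.exp ((θ : ℂ) * Complex.I) := by
    rw [hζdef, hθdef]; push_cast; ring_nf
  have hζcs : ζ = (Real.cos θ : ℂ) + (Real.sin θ : ℂ) * Complex.I := by
    rw [hθζ, Complex.exp_mul_I, Complex.ofReal_cos, Complex.ofReal_sin]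
  -- ζ ≠ 1
  have hθm : θ * m = 2 * Real.pi := by
    rw [hθdef]
    field_simp
  have hθle : θ ≤ Real.pi := by nlinarith
  have hζ1 : ζ ≠ 1 := by
    intro h
    rw [hθζ, Complex.exp_eq_one_iff] at h
    obtain ⟨n, hn⟩ := h
    have h1 : (θ : ℂ) = (n : ℂ) * (2 * Real.pi) := by
      apply mul_right_cancel₀ Complex.I_ne_zero
      linear_combination hn
    have h2 : θ = (n : ℝ) * (2 * Real.pi) := by exact_mod_cast h1
    rcases le_or_gt (n : ℝ) 0 with hn0 | hn0
    · nlinarith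
    · have hn1 : (1 : ℝ) ≤ (n : ℝ) := by
        have : (1 : ℤ) ≤ n := by exact_mod_cast hn0
        exact_mod_cast this
      nlinarith
  -- the translation predicate
  set P : ℂ → Prop := fun v => ∃ g ∈ G, ∀ x, g x = x + v with hP
  have hPadd : ∀ v w, P v → P w → P (v + w) := by
    rintro v w ⟨g, hgG, hg⟩ ⟨g', hg'G, hg'⟩
    refine ⟨g * g', mul_mem hgG hg'G, fun x => ?_⟩
    have h1 : (g * g') x = g (g' x) := rfl
    rw [h1, hg', hg]; ring
  have hPneg : ∀ v, P v → P (-v) := by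
    rintro v ⟨g, hgG, hg⟩
    refine ⟨g⁻¹, inv_mem hgG, fun x => ?_⟩
    have h1 : g (x + -v) = x := by rw [hg]; ring
    calc g⁻¹ x = g⁻¹ (g (x + -v)) := by rw [h1]
    _ = x + -v := g.inv_apply_self _
  set v₀ : ℂ := (1 - ζ) * (p - q) with hv₀def
  have hv₀ : v₀ ≠ 0 :=
    mul_ne_zero (sub_ne_zero.mpr (Ne.symm hζ1)) (sub_ne_zero.mpr hpq)
  have hPv₀ : P v₀ := by
    refine ⟨r * s⁻¹, mul_mem hrG (inv_mem hsG), fun x => ?_⟩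
    have h1 : (r * s⁻¹) x = r (s⁻¹ x) := rfl
    have h2 : r (s⁻¹ x) = s (s⁻¹ x) + v₀ := by rw [hr, hs, hv₀def]; ring
    rw [h1, h2, s.apply_inv_self]
  have hPζ : ∀ v, P v → P (ζ * v) := by
    rintro v ⟨g, hgG, hg⟩
    refine ⟨r * g * r⁻¹, mul_mem (mul_mem hrG hgG) (inv_mem hrG), fun x => ?_⟩
    have h1 : (r * g * r⁻¹) x = r (g (r⁻¹ x)) := rfl
    have h2 : r (r⁻¹ x + v) = r (r⁻¹ x) + ζ * v := by rw [hr, hr]; ring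
    rw [h1, hg, h2, r.apply_inv_self]
  -- a contraction factor
  obtain ⟨w, hw0, hw1, hw⟩ : ∃ w : ℂ, w ≠ 0 ∧ ‖w‖ < 1 ∧ ∀ v, P v → P (w * v) := by
    by_cases h7 : 7 ≤ m
    · -- use w = ζ - 1
      refine ⟨ζ - 1, sub_ne_zero.mpr hζ1, ?_, ?_⟩
      · have h7R : (7 : ℝ) ≤ m := by exact_mod_cast h7
        have hθlt : θ < Real.pi / 3 := by
          rw [hθdef, div_lt_div_iff₀ (by positivity) (by norm_num)]
          nlinarith
        have hθmem : θ ∈ Set.Icc 0 Real.pi := ⟨hθpos.le, by nlinarith⟩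
        have h3mem : Real.pi / 3 ∈ Set.Icc 0 Real.pi := ⟨by positivity, by nlinarith⟩
        have hcos : Real.cos (Real.pi / 3) < Real.cos θ :=
          Real.strictAntiOn_cos hθmem h3mem hθlt
        rw [Real.cos_pi_div_three] at hcos
        have h1 : ζ - 1 = ((Real.cos θ - 1 : ℝ) : ℂ) + (Real.sin θ : ℂ) * Complex.I := by
          rw [hζcs]; push_cast; ring
        rw [h1, Complex.norm_add_mul_I, Real.sqrt_lt' one_pos]
        nlinarith [Real.sin_sq_add_cos_sq θ]
      · intro v hv
        have := hPadd _ _ (hPζ v hv) (hPneg v hv)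
        have he : (ζ - 1) * v = ζ * v + -v := by ring
        rwa [he]
    · -- then m = 5; use w = ζ + ζ^4 = 2 cos θ
      have hm5 : m = 5 := by
        simp only [Set.mem_insert_iff, Set.mem_singleton_iff, not_or] at hm'
        omega
      have hζ5 : ζ ^ (5:ℕ) = 1 := by
        rw [hζdef, ← Complex.exp_nat_mul]
        rw [show ((5:ℕ) : ℂ) * (2 * (Real.pi:ℂ) * Complex.I / m) = 2 * Real.pi * Complex.I by
          rw [hm5]; push_cast; field_simp]
        exact Complex.exp_two_pi_mul_I
      have hζne : ζ ≠ 0 := Complex.exp_ne_zero _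
      have hζ4 : ζ ^ (4:ℕ) = ζ⁻¹ := by
        field_simp
        calc ζ ^ (4:ℕ) * ζ = ζ ^ (5:ℕ) := by ring
        _ = 1 := hζ5
      have hζinv : ζ⁻¹ = Complex.exp (-((θ:ℂ) * Complex.I)) := by
        rw [hθζ, ← Complex.exp_neg]
      have hinv' : ζ⁻¹ = Complex.cos (θ : ℂ) - Complex.sin (θ : ℂ) * Complex.I := by
        rw [hζinv, show -((θ:ℂ) * Complex.I) = (-(θ:ℂ)) * Complex.I by ring,
          Complex.exp_mul_I, Complex.cos_neg, Complex.sin_neg]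
        ring
      have hwc : ζ + ζ ^ (4:ℕ) = ((2 * Real.cos θ : ℝ) : ℂ) := by
        rw [hζ4, hinv', hθζ, Complex.exp_mul_I]
        push_cast [← Complex.ofReal_cos]
        ring
      -- bounds on cos θ with θ = 2π/5
      have hθ5 : θ = 2 * Real.pi / 5 := by rw [hθdef, hm5]; norm_num
      have hθmem : θ ∈ Set.Icc 0 Real.pi := ⟨hθpos.le, by rw [hθ5]; nlinarith⟩
      have h3mem : Real.pi / 3 ∈ Set.Icc 0 Real.pi := ⟨by positivity, by nlinarith⟩
      have h2mem : Real.pi / 2 ∈ Set.Icc 0 Real.pi := ⟨by positivity, by nlinarith⟩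
      have hlt1 : Real.pi / 3 < θ := by rw [hθ5]; nlinarith
      have hlt2 : θ < Real.pi / 2 := by rw [hθ5]; nlinarith
      have hcu : Real.cos θ < 1/2 := by
        have := Real.strictAntiOn_cos h3mem hθmem hlt1
        rwa [Real.cos_pi_div_three] at this
      have hcl : 0 < Real.cos θ := by
        have := Real.strictAntiOn_cos hθmem h2mem hlt2
        rwa [Real.cos_pi_div_two] at this
      refine ⟨ζ + ζ ^ (4:ℕ), ?_, ?_, ?_⟩
      · rw [hwc]
        simp only [ne_eq, Complex.ofReal_eq_zero]
        positivity
      · rw [hwc, Complex.norm_real, Real.norm_eq_abs, abs_of_pos (by positivity)]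
        linarith
      · intro v hv
        have h4 := hPζ _ (hPζ _ (hPζ _ (hPζ _ hv)))
        have := hPadd _ _ h4 (hPζ v hv)
        have he : (ζ + ζ ^ (4:ℕ)) * v = ζ * (ζ * (ζ * (ζ * v))) + ζ * v := by ring
        rwa [he]
  -- iterate
  have hPk : ∀ k : ℕ, P (w ^ k * v₀) := by
    intro k
    induction k with
    | zero => simpa using hPv₀
    | succ n ih =>
      have := hw _ ih
      have he : w ^ (n + 1) * v₀ = w * (w ^ n * v₀) := by ring
      rwa [he]
  -- part 1
  have part1 : ∀ ε : ℝ, 0 < ε → ∃ g ∈ G, ∃ v : ℂ, v ≠ 0 ∧ ‖v‖ < ε ∧ ∀ x, g x = x + v := by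
    intro ε hε
    have hv₀pos : 0 < ‖v₀‖ := norm_pos_iff.mpr hv₀
    obtain ⟨k, hk⟩ := exists_pow_lt_of_lt_one (div_pos hε hv₀pos) hw1
    obtain ⟨g, hgG, hg⟩ := hPk k
    refine ⟨g, hgG, w ^ k * v₀, mul_ne_zero (pow_ne_zero _ hw0) hv₀, ?_, hg⟩
    rw [norm_mul, norm_pow]
    calc ‖w‖ ^ k * ‖v₀‖ < ε / ‖v₀‖ * ‖v₀‖ := by
          exact mul_lt_mul_of_pos_right hk hv₀pos
    _ = ε := div_mul_cancel₀ ε (ne_of_gt hv₀pos)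
  refine ⟨part1, fun h => ?_⟩
  -- part 2
  have hS := h (Metric.closedBall 0 1) (isCompact_closedBall 0 1)
  set S := {g : ℂ ≃ᵢ ℂ | g ∈ G ∧ ((g : ℂ ≃ᵢ ℂ) '' Metric.closedBall 0 1 ∩
    Metric.closedBall 0 1).Nonempty} with hSdef
  set F : Finset ℝ := (hS.toFinset.image fun g => ‖g 0‖).filter (fun x => 0 < x) with hFdef
  have key : ∀ ε : ℝ, 0 < ε → ε ≤ 1 → ∃ x ∈ F, x < ε := by
    intro ε hε hε1
    obtain ⟨g, hgG, v, hv0, hvε, hgv⟩ := part1 ε hε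
    have hg0 : g 0 = v := by rw [hgv 0, zero_add]
    have hgS : g ∈ S := by
      refine ⟨hgG, v, ⟨0, by simp, hg0⟩, ?_⟩
      rw [Metric.mem_closedBall, dist_zero_right]
      linarith
    refine ⟨‖g 0‖, Finset.mem_filter.mpr ⟨Finset.mem_image.mpr
      ⟨g, hS.mem_toFinset.mpr hgS, rfl⟩, ?_⟩, ?_⟩
    · rw [hg0]; exact norm_pos_iff.mpr hv0
    · rw [hg0]; exact hvε
  obtain ⟨x1, hx1F, _⟩ := key 1 one_pos le_rfl
  have hFne : F.Nonempty := ⟨_, hx1F⟩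
  have hminpos : 0 < F.min' hFne := (Finset.mem_filter.mp (F.min'_mem hFne)).2
  obtain ⟨x, hxF, hxlt⟩ := key (min (F.min' hFne) 1) (lt_min hminpos one_pos)
    (min_le_right _ _)
  have h1 : F.min' hFne ≤ x := F.min'_le x hxF
  have h2 : min (F.min' hFne) 1 ≤ F.min' hFne := min_le_left _ _
  linarith
end

section
/- The map r₁(x) = ζ x ζ on ℍ, where ζ = (1+i+j+k)/2, fixes the plane spanned by i-j and (i-j)ω pointwise (equivalently fixes every quaternion a+bi+cj+dk with a=0 and b+c+d=0) and has order 3. -/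
open Quaternion

/-- The map `r₁(x) = ζxζ` with `ζ = (1+i+j+k)/2` pointwise fixes the plane
spanned by `i-j` and `(i-j)ω` — equivalently, it fixes every quaternion
`a+bi+cj+dk` with `a = 0` and `b+c+d = 0` — and it has order 3. -/
theorem r1_fixes_plane_order_three :
    let ζ : ℍ[ℝ] := ⟨1/2, 1/2, 1/2, 1/2⟩
    let ω : ℍ[ℝ] := ⟨-1/2, 1/2, 1/2, 1/2⟩
    let imj : ℍ[ℝ] := ⟨0, 1, -1, 0⟩
    (↑(Submodule.span ℝ ({imj, imj * ω} : Set ℍ[ℝ])) =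
      {x : ℍ[ℝ] | x.re = 0 ∧ x.imI + x.imJ + x.imK = 0}) ∧
    (∀ x : ℍ[ℝ], x.re = 0 → x.imI + x.imJ + x.imK = 0 → ζ * x * ζ = x) ∧
    (∀ x : ℍ[ℝ], ζ * (ζ * (ζ * x * ζ) * ζ) * ζ = x) ∧
    (∃ x : ℍ[ℝ], ζ * x * ζ ≠ x) := by
  intro ζ ω imj
  have himjω : imj * ω = (⟨0, -1, 0, 1⟩ : ℍ[ℝ]) := by
    show (QuaternionAlgebra.mk 0 1 (-1) 0 : ℍ[ℝ]) * ⟨-1/2, 1/2, 1/2, 1/2⟩ = _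
    ext <;> simp [QuaternionAlgebra.re_mul, QuaternionAlgebra.imI_mul,
      QuaternionAlgebra.imJ_mul, QuaternionAlgebra.imK_mul] <;> ring
  refine ⟨?_, ?_, ?_, ?_⟩
  · ext x
    simp only [SetLike.mem_coe, Set.mem_setOf_eq]
    constructor
    · intro hx
      refine Submodule.span_induction ?_ ?_ ?_ ?_ hx
      · rintro y (rfl | rfl)
        · exact ⟨rfl, by norm_num⟩
        · rw [himjω]; exact ⟨rfl, by norm_num⟩
      · simp
      · rintro a b _ _ ⟨h1, h2⟩ ⟨h3, h4⟩
        constructor <;> simp [QuaternionAlgebra.re_add] <;> linarith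
      · rintro r a _ ⟨h1, h2⟩
        refine ⟨by show r * a.re = 0; rw [h1]; ring, ?_⟩
        show r * a.imI + r * a.imJ + r * a.imK = 0
        linear_combination r * h2
    · rintro ⟨h1, h2⟩
      have hx : x = (-x.imJ) • imj + x.imK • (imj * ω) := by
        ext <;> simp only [Quaternion.re_add, Quaternion.imI_add, Quaternion.imJ_add,
          Quaternion.imK_add, Quaternion.re_smul, Quaternion.imI_smul, Quaternion.imJ_smul,
          Quaternion.imK_smul] <;> rw [himjω] <;> simp [imj] <;> linarith
      rw [hx]
      exact Submodule.add_mem _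
        (Submodule.smul_mem _ _ (Submodule.subset_span (Or.inl rfl)))
        (Submodule.smul_mem _ _ (Submodule.subset_span (Or.inr rfl)))
  · intro x h1 h2
    ext <;> simp only [Quaternion.re_mul, Quaternion.imI_mul, Quaternion.imJ_mul, Quaternion.imK_mul] <;> simp [ζ, h1] <;> linarith
  · intro x
    have h3 : ζ * ζ * ζ = -1 := by
      ext <;> simp only [Quaternion.re_mul, Quaternion.imI_mul, Quaternion.imJ_mul, Quaternion.imK_mul] <;> simp [ζ] <;> norm_num
    calc ζ * (ζ * (ζ * x * ζ) * ζ) * ζ = (ζ * ζ * ζ) * x * (ζ * ζ * ζ) := by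
          noncomm_ring
      _ = x := by rw [h3]; noncomm_ring
  · use ⟨0, 1, 0, 0⟩
    intro h
    have := congrArg QuaternionAlgebra.imI h
    rw [Quaternion.imI_mul, Quaternion.re_mul ζ ⟨0, 1, 0, 0⟩, Quaternion.imI_mul ζ ⟨0, 1, 0, 0⟩,
      Quaternion.imJ_mul ζ ⟨0, 1, 0, 0⟩, Quaternion.imK_mul ζ ⟨0, 1, 0, 0⟩] at this
    simp [ζ] at this
    norm_num at this
end

section
/- The fixed-point set of the affine map r₁'(x) = ζ x ζ + 2 on ℍ, with ζ = (1+i+j+k)/2, is {a+bi+cj+dk : a=1, b+c+d=1}, and the fixed-point set of r_i(x) = ζ^i x ζ (where ζ^i = (-i)ζ i) is {a+bi+cj+dk : b=0, a+c-d=0}. The unique common fixed point of r₁' and r_i is 1+k. -/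
open Quaternion

set_option maxHeartbeats 1000000 in
/-- Fixed sets of `r₁'(x) = ζxζ + 2` and `r_i(x) = ζ^i x ζ` (with
`ζ = (1+i+j+k)/2` and `ζ^i = (-i)ζi`), and their unique common fixed point
`1 + k`. -/
theorem fixed_sets_r1'_ri :
    let ζ : ℍ[ℝ] := ⟨1/2, 1/2, 1/2, 1/2⟩
    let qi : ℍ[ℝ] := ⟨0, 1, 0, 0⟩
    let qk : ℍ[ℝ] := ⟨0, 0, 0, 1⟩
    let ζi : ℍ[ℝ] := (-qi) * ζ * qi
    ({x : ℍ[ℝ] | ζ * x * ζ + 2 = x} =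
      {x : ℍ[ℝ] | x.re = 1 ∧ x.imI + x.imJ + x.imK = 1}) ∧
    ({x : ℍ[ℝ] | ζi * x * ζ = x} =
      {x : ℍ[ℝ] | x.imI = 0 ∧ x.re + x.imJ - x.imK = 0}) ∧
    ({x : ℍ[ℝ] | ζ * x * ζ + 2 = x} ∩ {x : ℍ[ℝ] | ζi * x * ζ = x} =
      {1 + qk}) := by
  intro ζ qi qk ζi
  have e2 : (2:ℍ[ℝ]) = ⟨2,0,0,0⟩ := rfl
  have e1 : ((1:ℍ[ℝ]) + qk) = ⟨1,0,0,1⟩ := by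
    ext <;> simp only [Quaternion.re_add, Quaternion.imI_add, Quaternion.imJ_add, Quaternion.imK_add] <;> simp [qk]
  have eζi : ζi = ⟨1/2, 1/2, -1/2, -1/2⟩ := by
    ext <;> simp only [ζi, Quaternion.re_mul, Quaternion.imI_mul, Quaternion.imJ_mul,
      Quaternion.imK_mul, Quaternion.re_neg, Quaternion.imI_neg, Quaternion.imJ_neg, Quaternion.imK_neg] <;> simp [ζ, qi] <;> norm_num
  have h1 : ∀ x : ℍ[ℝ], ζ * x * ζ + 2 = x ↔ (x.re = 1 ∧ x.imI + x.imJ + x.imK = 1) := by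
    intro x
    simp only [Quaternion.ext_iff, Quaternion.re_mul, Quaternion.imI_mul, Quaternion.imJ_mul,
      Quaternion.imK_mul, Quaternion.re_add, Quaternion.imI_add, Quaternion.imJ_add,
      Quaternion.imK_add]
    rw [e2]
    simp only [ζ]
    constructor
    · rintro ⟨a, b, c, d⟩
      constructor <;> linarith
    · rintro ⟨a, b⟩
      refine ⟨by linarith, by linarith, by linarith, by linarith⟩
  have h2 : ∀ x : ℍ[ℝ], ζi * x * ζ = x ↔ (x.imI = 0 ∧ x.re + x.imJ - x.imK = 0) := by
    intro x
    simp only [Quaternion.ext_iff, Quaternion.re_mul, Quaternion.imI_mul, Quaternion.imJ_mul,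
      Quaternion.imK_mul]
    rw [eζi]
    simp only [ζ]
    constructor
    · rintro ⟨a, b, c, d⟩
      constructor <;> linarith
    · rintro ⟨a, b⟩
      refine ⟨by linarith, by linarith, by linarith, by linarith⟩
  refine ⟨Set.ext fun x => h1 x, Set.ext fun x => h2 x, Set.ext fun x => ?_⟩
  simp only [Set.mem_inter_iff, Set.mem_setOf_eq, Set.mem_singleton_iff, h1, h2,
    Quaternion.ext_iff]
  simp only [e1]
  constructor
  · rintro ⟨⟨a, b⟩, c, d⟩
    refine ⟨by linarith, by linarith, by linarith, by linarith⟩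
  · rintro ⟨a, b, c, d⟩
    refine ⟨⟨by linarith, by linarith⟩, by linarith, by linarith⟩
end
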